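/- Let β be a real number with β ≥ e + e⁻², and let p ∈ H₁ with p(z) ≠ 0 for all z ∈ 𝔻. If the function z ↦ p(z)² + β·z·p′(z)/p(z) is subordinate to z ↦ e^z on 𝔻, then p is subordinate to z ↦ e^z on 𝔻. -/

import Mathlib

open Complex

noncomputable section

/-- The open unit disk in the complex plane. -/
def unitDisk : Set ℂ := Metric.ball 0 1

/-- `f` is subordinate to `g` on the open unit disk: there is an analytic
Schwarz function `w` with `w 0 = 0`, `‖w z‖ < 1` on the disk, and `f = g ∘ w`. -/
def Subord (f g : ℂ → ℂ) : Prop :=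
  ∃ w : ℂ → ℂ, DifferentiableOn ℂ w unitDisk ∧ w 0 = 0 ∧
    (∀ z ∈ unitDisk, ‖w z‖ < 1) ∧ ∀ z ∈ unitDisk, f z = g (w z)

section Aux

open Metric Set Filter Topology

private lemma hasDerivAt_re_comp {F : ℝ → ℂ} {v : ℂ} {t : ℝ} (h : HasDerivAt F v t) :
    HasDerivAt (fun s => (F s).re) v.re t := by
  have := (Complex.reCLM.hasFDerivAt (x := F t)).comp t h.hasFDerivAt
  simpa [Function.comp_def] using this.hasDerivAt

private lemma hasDerivAt_im_comp {F : ℝ → ℂ} {v : ℂ} {t : ℝ} (h : HasDerivAt F v t) :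
    HasDerivAt (fun s => (F s).im) v.im t := by
  have := (Complex.imCLM.hasFDerivAt (x := F t)).comp t h.hasFDerivAt
  simpa [Function.comp_def] using this.hasDerivAt

private lemma hasDerivAt_normSq_comp {F : ℝ → ℂ} {v : ℂ} {t : ℝ} (h : HasDerivAt F v t) :
    HasDerivAt (fun s => Complex.normSq (F s))
      (2 * ((F t).re * v.re + (F t).im * v.im)) t := by
  have h1 := (hasDerivAt_re_comp h).mul (hasDerivAt_re_comp h)
  have h2 := (hasDerivAt_im_comp h).mul (hasDerivAt_im_comp h)
  have H := h1.add h2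
  have e : (fun s => Complex.normSq (F s))
      = fun s => (F s).re * (F s).re + (F s).im * (F s).im :=
    funext fun s => Complex.normSq_apply _
  rw [e]
  exact H.congr_deriv (by ring)

private lemma exists_primitive {g : ℂ → ℂ}
    (hg : DifferentiableOn ℂ g (Metric.ball (0:ℂ) 1)) :
    ∃ q : ℂ → ℂ, ∀ z ∈ Metric.ball (0:ℂ) 1, HasDerivAt q (g z) z := by
  classical
  set a : ℕ → ℂ := fun n => ((n.factorial : ℕ) : ℂ)⁻¹ * iteratedDeriv n g 0 with ha
  have hsum : ∀ z ∈ Metric.ball (0:ℂ) 1, HasSum (fun n => a n * z ^ n) (g z) := by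
    intro z hz
    have H := Complex.hasSum_taylorSeries_on_ball hg hz
    have e : (fun n : ℕ => a n * z ^ n)
        = fun n : ℕ => ((n.factorial : ℕ) : ℂ)⁻¹ • (z - 0) ^ n • iteratedDeriv n g 0 := by
      funext n
      simp only [ha, smul_eq_mul, sub_zero]
      ring
    rw [e]
    exact H
  have key : ∀ r : ℝ, 0 < r → r < 1 → ∃ M : ℝ, 0 ≤ M ∧ ∀ n, ‖a n‖ * r ^ n ≤ M := by
    intro r hr0 hr1
    have hz : ((r : ℂ)) ∈ Metric.ball (0:ℂ) 1 := by
      rw [mem_ball_zero_iff, Complex.norm_real, Real.norm_of_nonneg hr0.le]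
      exact hr1
    have hs := (hsum _ hz).summable
    have ht : Tendsto (fun n => ‖a n * (r:ℂ) ^ n‖) atTop (𝓝 0) := by
      have := hs.tendsto_atTop_zero.norm
      simpa using this
    obtain ⟨M, hM⟩ := ht.bddAbove_range
    refine ⟨M, ?_, ?_⟩
    · exact le_trans (norm_nonneg _) (hM (Set.mem_range_self 0))
    · intro n
      have h1 := hM (Set.mem_range_self n)
      rwa [norm_mul, norm_pow, Complex.norm_real, Real.norm_of_nonneg hr0.le] at h1
  refine ⟨fun z => ∑' n : ℕ, a n / ((n : ℂ) + 1) * z ^ (n + 1), ?_⟩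
  intro z₀ hz₀
  have hz₀' : ‖z₀‖ < 1 := mem_ball_zero_iff.mp hz₀
  have h0n : (0:ℝ) ≤ ‖z₀‖ := norm_nonneg _
  set r₁ : ℝ := (‖z₀‖ + 1) / 2 with hr₁def
  set r₂ : ℝ := (r₁ + 1) / 2 with hr₂def
  have hr₁0 : 0 < r₁ := by rw [hr₁def]; linarith
  have hz₀r₁ : ‖z₀‖ < r₁ := by rw [hr₁def]; linarith
  have hr₁1 : r₁ < 1 := by rw [hr₁def]; linarith
  have hr₁₂ : r₁ < r₂ := by rw [hr₂def]; linarith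
  have hr₂0 : 0 < r₂ := by linarith
  have hr₂1 : r₂ < 1 := by rw [hr₂def]; linarith
  obtain ⟨M, hM0, hM⟩ := key r₂ hr₂0 hr₂1
  set ρ : ℝ := r₁ / r₂ with hρdef
  have hρ0 : 0 ≤ ρ := div_nonneg hr₁0.le hr₂0.le
  have hρ1 : ρ < 1 := (div_lt_one hr₂0).mpr hr₁₂
  have hgeo : Summable (fun n : ℕ => M * ρ ^ n) :=
    (summable_geometric_of_lt_one hρ0 hρ1).mul_left M
  have hcoef : ∀ n : ℕ, ‖a n‖ * r₁ ^ n ≤ M * ρ ^ n := by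
    intro n
    have e : ‖a n‖ * r₁ ^ n = (‖a n‖ * r₂ ^ n) * ρ ^ n := by
      have hgen : ∀ A B : ℝ, B ≠ 0 → B ^ n * (A / B) ^ n = A ^ n := by
        intro A B hB
        rw [div_pow, mul_div_assoc', mul_comm]
        exact mul_div_cancel_right₀ _ (pow_ne_zero n hB)
      have e2 : r₂ ^ n * ρ ^ n = r₁ ^ n := by
        rw [hρdef]
        exact hgen r₁ r₂ hr₂0.ne'
      rw [mul_assoc, e2]
    rw [e]
    exact mul_le_mul_of_nonneg_right (hM n) (pow_nonneg hρ0 n)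
  have hball : Metric.ball (0:ℂ) r₁ ⊆ Metric.ball (0:ℂ) 1 :=
    Metric.ball_subset_ball hr₁1.le
  have hub : ∀ (n : ℕ) (x : ℂ), x ∈ Metric.ball (0:ℂ) r₁ → ‖a n * x ^ n‖ ≤ M * ρ ^ n := by
    intro n x hx
    have hx' : ‖x‖ < r₁ := mem_ball_zero_iff.mp hx
    calc ‖a n * x ^ n‖ = ‖a n‖ * ‖x‖ ^ n := by rw [norm_mul, norm_pow]
      _ ≤ ‖a n‖ * r₁ ^ n := by
          apply mul_le_mul_of_nonneg_left _ (norm_nonneg _)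
          exact pow_le_pow_left₀ (norm_nonneg x) hx'.le n
      _ ≤ M * ρ ^ n := hcoef n
  have hTU : TendstoUniformlyOn
      (fun N (x : ℂ) => ∑ n ∈ Finset.range N, a n * x ^ n) g atTop (Metric.ball (0:ℂ) r₁) := by
    have h1 := tendstoUniformlyOn_tsum_nat hgeo hub
    apply h1.congr_right
    intro x hx
    exact (hsum x (hball hx)).tsum_eq
  have hder : ∀ (N : ℕ), ∀ x ∈ Metric.ball (0:ℂ) r₁,
      HasDerivAt (fun y => ∑ n ∈ Finset.range N, a n / ((n:ℂ)+1) * y ^ (n+1))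
        (∑ n ∈ Finset.range N, a n * x ^ n) x := by
    intro N x _
    have h1 : ∀ n ∈ Finset.range N,
        HasDerivAt (fun y : ℂ => a n / ((n:ℂ)+1) * y ^ (n+1)) (a n * x ^ n) x := by
      intro n _
      have h2 : HasDerivAt (fun y : ℂ => y ^ (n+1)) ((((n:ℕ)+1 : ℕ) : ℂ) * x ^ n) x := by
        simpa using hasDerivAt_pow (n+1) x
      have h3 := h2.const_mul (a n / ((n:ℂ)+1))
      have hne : ((n:ℂ)+1) ≠ 0 := Nat.cast_add_one_ne_zero n
      have e : a n / ((n:ℂ)+1) * ((((n:ℕ)+1 : ℕ) : ℂ) * x ^ n) = a n * x ^ n := by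
        push_cast
        field_simp
        try ring
      rw [e] at h3
      exact h3
    have := HasDerivAt.fun_sum h1
    simpa using this
  have hpt : ∀ x ∈ Metric.ball (0:ℂ) r₁,
      Tendsto (fun N => ∑ n ∈ Finset.range N, a n / ((n:ℂ)+1) * x ^ (n+1)) atTop
        (𝓝 (∑' n : ℕ, a n / ((n:ℂ)+1) * x ^ (n+1))) := by
    intro x hx
    have hx' : ‖x‖ < r₁ := mem_ball_zero_iff.mp hx
    have hsumm : Summable (fun n : ℕ => a n / ((n:ℂ)+1) * x ^ (n+1)) := by
      apply Summable.of_norm_bounded (g := fun n => r₁ * (M * ρ ^ n)) (hgeo.mul_left r₁)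
      intro n
      have hone : (1:ℝ) ≤ ‖((n:ℂ)+1)‖ := by
        have : ((n:ℂ)+1) = (((n+1 : ℕ)) : ℂ) := by push_cast; ring
        rw [this, Complex.norm_natCast]
        exact_mod_cast Nat.succ_le_succ (Nat.zero_le n)
      have h1 : ‖a n / ((n:ℂ)+1) * x ^ (n+1)‖ ≤ ‖a n‖ * ‖x‖ ^ (n+1) := by
        rw [norm_mul, norm_div, norm_pow]
        apply mul_le_mul_of_nonneg_right _ (pow_nonneg (norm_nonneg x) _)
        apply div_le_self (norm_nonneg _) hone
      calc ‖a n / ((n:ℂ)+1) * x ^ (n+1)‖ ≤ ‖a n‖ * ‖x‖ ^ (n+1) := h1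
        _ ≤ ‖a n‖ * r₁ ^ (n+1) := by
            apply mul_le_mul_of_nonneg_left _ (norm_nonneg _)
            exact pow_le_pow_left₀ (norm_nonneg x) hx'.le _
        _ = r₁ * (‖a n‖ * r₁ ^ n) := by ring
        _ ≤ r₁ * (M * ρ ^ n) := mul_le_mul_of_nonneg_left (hcoef n) hr₁0.le
    exact hsumm.hasSum.tendsto_sum_nat
  exact hasDerivAt_of_tendstoUniformlyOn Metric.isOpen_ball hTU
    (Filter.Eventually.of_forall hder) hpt (mem_ball_zero_iff.mpr hz₀r₁)

private lemma exists_log {p : ℂ → ℂ} (hp : DifferentiableOn ℂ p (Metric.ball (0:ℂ) 1))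
    (hp0 : p 0 = 1) (hpne : ∀ z ∈ Metric.ball (0:ℂ) 1, p z ≠ 0) :
    ∃ q : ℂ → ℂ, q 0 = 0 ∧ (∀ z ∈ Metric.ball (0:ℂ) 1, HasDerivAt q (deriv p z / p z) z) ∧
      (∀ z ∈ Metric.ball (0:ℂ) 1, Complex.exp (q z) = p z) := by
  have hderiv : DifferentiableOn ℂ (fun z => deriv p z / p z) (Metric.ball (0:ℂ) 1) := by
    have h1 : AnalyticOnNhd ℂ p (Metric.ball (0:ℂ) 1) :=
      hp.analyticOnNhd Metric.isOpen_ball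
    exact DifferentiableOn.div (h1.deriv.differentiableOn) hp hpne
  obtain ⟨q₀, hq₀⟩ := exists_primitive hderiv
  have h0 : (0:ℂ) ∈ Metric.ball (0:ℂ) 1 := by
    rw [mem_ball_zero_iff]; norm_num
  set F : ℂ → ℂ := fun z => p z * Complex.exp (-q₀ z) with hF
  have hFd : ∀ z ∈ Metric.ball (0:ℂ) 1, HasDerivAt F 0 z := by
    intro z hz
    have hpz : HasDerivAt p (deriv p z) z :=
      (hp.differentiableAt (Metric.isOpen_ball.mem_nhds hz)).hasDerivAt
    have he : HasDerivAt (fun w => Complex.exp (-q₀ w))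
        (Complex.exp (-q₀ z) * -(deriv p z / p z)) z := ((hq₀ z hz).neg).cexp
    have h2 := hpz.mul he
    have e : deriv p z * Complex.exp (-q₀ z)
        + p z * (Complex.exp (-q₀ z) * -(deriv p z / p z)) = 0 := by
      field_simp [hpne z hz]
      ring
    rw [e] at h2
    exact h2
  have hconst : ∀ z ∈ Metric.ball (0:ℂ) 1, F z = F 0 := by
    intro z hz
    refine (convex_ball (0:ℂ) 1).is_const_of_fderivWithin_eq_zero
      (fun w hw => ((hFd w hw).differentiableAt).differentiableWithinAt) ?_ hz h0
    intro w hw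
    have h1 := ((hFd w hw).hasFDerivAt.hasFDerivWithinAt).fderivWithin (Metric.isOpen_ball.uniqueDiffWithinAt hw)
    rw [h1]
    ext
    simp
  refine ⟨fun z => q₀ z - q₀ 0, by simp, ?_, ?_⟩
  · intro z hz
    simpa using (hq₀ z hz).sub_const (q₀ 0)
  · intro z hz
    have hc := hconst z hz
    simp only [hF, hp0, one_mul] at hc
    have h3 := congrArg (fun w => w * Complex.exp (q₀ z)) hc
    rw [mul_assoc, ← Complex.exp_add] at h3
    rw [show -q₀ z + q₀ z = 0 by ring, Complex.exp_zero, mul_one] at h3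
    rw [h3, ← Complex.exp_add]
    congr 1
    ring

private lemma jack {q : ℂ → ℂ} (hq : DifferentiableOn ℂ q (Metric.ball (0:ℂ) 1))
    (hq0 : q 0 = 0) {z₁ : ℂ} (hz₁ : z₁ ∈ Metric.ball (0:ℂ) 1) (hq₁ : 1 ≤ ‖q z₁‖) :
    ∃ z₀ ∈ Metric.ball (0:ℂ) 1, ∃ m : ℝ, 1 ≤ m ∧ ‖q z₀‖ = 1 ∧
      z₀ * deriv q z₀ = (m : ℂ) * q z₀ := by
  have hz₁n : ‖z₁‖ < 1 := mem_ball_zero_iff.mp hz₁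
  have hcont : ContinuousOn q (ball (0:ℂ) 1) := hq.continuousOn
  have hsub : closedBall (0:ℂ) ‖z₁‖ ⊆ ball (0:ℂ) 1 := by
    intro z hz
    exact mem_ball_zero_iff.mpr (lt_of_le_of_lt (mem_closedBall_zero_iff.mp hz) hz₁n)
  set K : Set ℂ := closedBall (0:ℂ) ‖z₁‖ ∩ (fun z => ‖q z‖) ⁻¹' (Ici 1) with hK
  have hKclosed : IsClosed K :=
    ContinuousOn.preimage_isClosed_of_isClosed ((hcont.mono hsub).norm)
      isClosed_closedBall isClosed_Ici
  have hKc : IsCompact K :=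
    (isCompact_closedBall (0:ℂ) ‖z₁‖).of_isClosed_subset hKclosed inter_subset_left
  have hKne : K.Nonempty := ⟨z₁, mem_closedBall_zero_iff.mpr le_rfl, hq₁⟩
  obtain ⟨w₀, hw₀K, hw₀min⟩ := hKc.exists_isMinOn hKne continuous_norm.continuousOn
  rw [isMinOn_iff] at hw₀min
  set r₀ : ℝ := ‖w₀‖ with hr₀
  have hw₀ball : w₀ ∈ ball (0:ℂ) 1 := hsub hw₀K.1
  have hr₀1 : r₀ < 1 := mem_ball_zero_iff.mp hw₀ball
  have hr₀z₁ : r₀ ≤ ‖z₁‖ := hw₀min z₁ ⟨mem_closedBall_zero_iff.mpr le_rfl, hq₁⟩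
  have hlt : ∀ z : ℂ, ‖z‖ < r₀ → ‖q z‖ < 1 := by
    intro z hzr
    by_contra h
    push_neg at h
    have hzK : z ∈ K :=
      ⟨mem_closedBall_zero_iff.mpr (le_trans hzr.le hr₀z₁), h⟩
    exact absurd (hw₀min z hzK) (not_le.mpr hzr)
  have hle : ∀ z : ℂ, ‖z‖ ≤ r₀ → ‖q z‖ ≤ 1 := by
    intro z hzr
    rcases eq_or_lt_of_le (norm_nonneg z) with h0 | h0
    · have : z = 0 := norm_eq_zero.mp h0.symm
      rw [this, hq0]; simp
    have hzball : z ∈ ball (0:ℂ) 1 := mem_ball_zero_iff.mpr (lt_of_le_of_lt hzr hr₀1)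
    have hcz : ContinuousAt q z := (hq.differentiableAt (isOpen_ball.mem_nhds hzball)).continuousAt
    have hpath : ContinuousAt (fun t : ℝ => q ((t:ℂ) * z)) 1 := by
      apply ContinuousAt.comp (x := (1:ℝ))
      · simpa using hcz
      · exact (Complex.continuous_ofReal.mul continuous_const).continuousAt
    have htend : Tendsto (fun t : ℝ => ‖q ((t:ℂ) * z)‖) (𝓝[<] (1:ℝ)) (𝓝 ‖q z‖) := by
      have h1 : Tendsto (fun t : ℝ => ‖q ((t:ℂ) * z)‖) (𝓝 (1:ℝ)) (𝓝 ‖q (((1:ℝ):ℂ) * z)‖) :=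
        (hpath.norm).tendsto
      have e1 : ((1:ℝ):ℂ) * z = z := by norm_num
      rw [e1] at h1
      exact h1.mono_left nhdsWithin_le_nhds
    refine le_of_tendsto htend ?_
    filter_upwards [Ioo_mem_nhdsLT_of_mem (show (1:ℝ) ∈ Set.Ioc 0 1 from ⟨zero_lt_one, le_rfl⟩)]
      with t ht
    have htn : ‖(t:ℂ) * z‖ < r₀ := by
      rw [norm_mul, Complex.norm_real, Real.norm_of_nonneg ht.1.le]
      calc t * ‖z‖ < 1 * ‖z‖ := by
            exact mul_lt_mul_of_pos_right ht.2 h0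
        _ = ‖z‖ := one_mul _
        _ ≤ r₀ := hzr
    exact (hlt _ htn).le
  have habs1 : ‖q w₀‖ = 1 := le_antisymm (hle w₀ le_rfl) hw₀K.2
  have hr₀0 : 0 < r₀ := by
    rcases eq_or_lt_of_le (norm_nonneg w₀) with h0 | h0
    · exfalso
      have : w₀ = 0 := norm_eq_zero.mp h0.symm
      rw [this, hq0] at habs1
      simp at habs1
    · exact h0
  -- Schwarz lemma for φ(w) = q (w₀ * w)
  set φ : ℂ → ℂ := fun w => q (w₀ * w) with hφ
  have hmapsarg : ∀ w : ℂ, w ∈ ball (0:ℂ) 1 → ‖w₀ * w‖ < r₀ := by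
    intro w hw
    rw [norm_mul]
    exact (mul_lt_iff_lt_one_right hr₀0).mpr (mem_ball_zero_iff.mp hw)
  have hφd : DifferentiableOn ℂ φ (ball (0:ℂ) 1) := by
    intro w hw
    have h1 : DifferentiableAt ℂ q (w₀ * w) := by
      apply hq.differentiableAt
      apply isOpen_ball.mem_nhds
      exact mem_ball_zero_iff.mpr (lt_trans (hmapsarg w hw) hr₀1)
    exact (h1.comp w ((differentiableAt_const w₀).mul differentiableAt_id)).differentiableWithinAt
  have hmaps : Set.MapsTo φ (ball (0:ℂ) 1) (ball (0:ℂ) 1) := by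
    intro w hw
    exact mem_ball_zero_iff.mpr (hlt _ (hmapsarg w hw))
  have hφ0 : φ 0 = 0 := by simp [hφ, hq0]
  have schwarz : ∀ w : ℂ, ‖w‖ < 1 → ‖φ w‖ ≤ ‖w‖ := by
    intro w hw
    have := Complex.norm_le_norm_of_mapsTo_ball hφd (hmaps.mono_right ball_subset_closedBall) hφ0
      (z := w) hw
    simpa using this
  -- derivative data
  have hqd : HasDerivAt q (deriv q w₀) w₀ :=
    (hq.differentiableAt (isOpen_ball.mem_nhds hw₀ball)).hasDerivAt
  set d : ℂ := deriv q w₀ with hd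
  set ζ : ℂ := q w₀ with hζ
  set c : ℂ := (starRingEnd ℂ) ζ * (w₀ * d) with hc
  -- the radial path
  have hpath1 : HasDerivAt (fun t : ℝ => w₀ * (t:ℂ)) w₀ 1 := by
    simpa using (Complex.ofRealCLM.hasDerivAt (x := (1:ℝ))).const_mul w₀
  have hcomp1 : HasDerivAt (fun t : ℝ => q (w₀ * (t:ℂ))) (w₀ * d) 1 := by
    have h := HasDerivAt.scomp_of_eq (x := (1:ℝ)) hqd hpath1 (by norm_num)
    simpa [smul_eq_mul, mul_comm, Function.comp_def] using h
  set H : ℝ → ℝ := fun t => ((starRingEnd ℂ) ζ * q (w₀ * (t:ℂ))).re with hH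
  have hHd : HasDerivAt H c.re 1 :=
    hasDerivAt_re_comp (hcomp1.const_mul ((starRingEnd ℂ) ζ))
  have hζnorm : ((starRingEnd ℂ) ζ * ζ) = 1 := by
    rw [mul_comm, Complex.mul_conj]
    have : Complex.normSq ζ = 1 := by
      rw [← Complex.sq_norm, habs1]; norm_num
    rw [this]; norm_num
  have hH1 : H 1 = 1 := by
    have e1 : w₀ * ((1:ℝ):ℂ) = w₀ := by norm_num
    rw [hH]
    simp only [e1, ← hζ]
    rw [hζnorm]
    norm_num
  have hslope : ∀ t : ℝ, t ∈ Set.Ioo (0:ℝ) 1 → 1 ≤ slope H 1 t := by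
    intro t ht
    have hle1 : H t ≤ t := by
      have h2 : H t ≤ ‖(starRingEnd ℂ) ζ * q (w₀ * (t:ℂ))‖ := by
        have := Complex.abs_re_le_norm ((starRingEnd ℂ) ζ * q (w₀ * (t:ℂ)))
        exact le_trans (le_abs_self _) this
      have h3 : ‖(starRingEnd ℂ) ζ * q (w₀ * (t:ℂ))‖ = ‖q (w₀ * (t:ℂ))‖ := by
        rw [norm_mul, RCLike.norm_conj, habs1, one_mul]
      have h4 : ‖φ ((t:ℂ))‖ ≤ ‖((t:ℂ))‖ := by
        apply schwarz
        rw [Complex.norm_real, Real.norm_of_nonneg ht.1.le]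
        exact ht.2
      have h5 : ‖((t:ℂ))‖ = t := by
        rw [Complex.norm_real, Real.norm_of_nonneg ht.1.le]
      have h6 : ‖φ ((t:ℂ))‖ = ‖q (w₀ * (t:ℂ))‖ := rfl
      rw [h6, h5] at h4
      rw [h3] at h2
      linarith
    have hden : t - 1 < 0 := by linarith [ht.2]
    rw [slope_def_field]
    rw [le_div_iff_of_neg hden]
    rw [hH1]
    linarith
  have hcre : 1 ≤ c.re := by
    have h1 := hasDerivAt_iff_tendsto_slope.mp hHd
    have h2 : Tendsto (slope H 1) (𝓝[<] (1:ℝ)) (𝓝 c.re) := by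
      apply h1.mono_left
      apply nhdsWithin_mono
      intro x hx
      simp only [Set.mem_compl_iff, Set.mem_singleton_iff]
      exact ne_of_lt hx
    refine ge_of_tendsto h2 ?_
    filter_upwards [Ioo_mem_nhdsLT_of_mem (show (1:ℝ) ∈ Set.Ioc 0 1 from ⟨zero_lt_one, le_rfl⟩)]
      with t ht using hslope t ht
  -- the circular path
  have hpathI : HasDerivAt (fun θ : ℝ => (θ:ℂ) * Complex.I) Complex.I 0 := by
    simpa using (Complex.ofRealCLM.hasDerivAt (x := (0:ℝ))).mul_const Complex.I
  have hexpI : HasDerivAt (fun θ : ℝ => Complex.exp ((θ:ℂ) * Complex.I)) Complex.I 0 := by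
    have h2 : HasDerivAt Complex.exp (Complex.exp (((0:ℝ):ℂ) * Complex.I)) (((0:ℝ):ℂ) * Complex.I) :=
      Complex.hasDerivAt_exp _
    have h3 := HasDerivAt.scomp (x := (0:ℝ)) h2 hpathI
    simpa [Function.comp_def] using h3
  have hpath2 : HasDerivAt (fun θ : ℝ => w₀ * Complex.exp ((θ:ℂ) * Complex.I)) (w₀ * Complex.I) 0 :=
    hexpI.const_mul w₀
  have hcomp2 : HasDerivAt (fun θ : ℝ => q (w₀ * Complex.exp ((θ:ℂ) * Complex.I)))
      (w₀ * Complex.I * d) 0 := by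
    have h := HasDerivAt.scomp_of_eq (x := (0:ℝ)) hqd hpath2 (by simp)
    have e : (w₀ * Complex.I) • d = w₀ * Complex.I * d := by simp [smul_eq_mul]
    rw [e] at h
    exact h
  have hGd := hasDerivAt_normSq_comp hcomp2
  have e0 : q (w₀ * Complex.exp (((0:ℝ):ℂ) * Complex.I)) = ζ := by
    simp [hζ]
  rw [e0] at hGd
  have hGmax : IsLocalMax (fun θ : ℝ => Complex.normSq (q (w₀ * Complex.exp ((θ:ℂ) * Complex.I)))) 0 := by
    apply Filter.Eventually.of_forall
    intro θ
    have hθr : ‖w₀ * Complex.exp ((θ:ℂ) * Complex.I)‖ ≤ r₀ := by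
      rw [norm_mul, Complex.norm_exp_ofReal_mul_I, mul_one]
    have h1 := hle _ hθr
    have h2 : Complex.normSq (q (w₀ * Complex.exp ((θ:ℂ) * Complex.I)))
        = ‖q (w₀ * Complex.exp ((θ:ℂ) * Complex.I))‖^2 := by
      rw [← Complex.sq_norm]
    have h3 : Complex.normSq (q (w₀ * Complex.exp (((0:ℝ):ℂ) * Complex.I))) = 1 := by
      rw [e0, ← Complex.sq_norm, habs1]; norm_num
    simp only []
    rw [h3, h2]
    nlinarith [norm_nonneg (q (w₀ * Complex.exp ((θ:ℂ) * Complex.I)))]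
  have hder0 := hGmax.hasDerivAt_eq_zero hGd
  -- conclude Im c = 0
  have hcim : c.im = 0 := by
    have e1 : ζ.re * (w₀ * Complex.I * d).re + ζ.im * (w₀ * Complex.I * d).im
        = (Complex.I * c).re := by
      rw [hc]
      have : Complex.I * ((starRingEnd ℂ) ζ * (w₀ * d)) = (starRingEnd ℂ) ζ * (w₀ * Complex.I * d) := by
        ring
      rw [this]
      simp [Complex.mul_re, Complex.conj_re, Complex.conj_im]
      try ring
    have e2 : (Complex.I * c).re = -c.im := by
      simp [Complex.mul_re]
    have : 2 * ((Complex.I * c).re) = 0 := by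
      rw [← e1]; exact hder0
    rw [e2] at this
    linarith
  refine ⟨w₀, hw₀ball, c.re, hcre, habs1, ?_⟩
  have hcr : ((c.re : ℝ) : ℂ) = c := by
    apply Complex.ext
    · simp
    · simp [hcim]
  have h5 : ζ * c = w₀ * d := by
    rw [hc]
    calc ζ * ((starRingEnd ℂ) ζ * (w₀ * d)) = ((starRingEnd ℂ) ζ * ζ) * (w₀ * d) := by ring
      _ = w₀ * d := by rw [hζnorm, one_mul]
  rw [← hd, ← hζ, ← h5, hcr]
  ring

private lemma poly_neg {x : ℝ} (hx1 : -1 ≤ x) (hx0 : x ≤ 0) :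
    1 - 2 * ((1 - x^2) * (1 - (1 - x^2)/4)^2) + 2.7 * (x * (1 - 2*x)) ≤ 0 := by
  nlinarith [sq_nonneg x, sq_nonneg (x+1), sq_nonneg (x^2+x), sq_nonneg (1-x^2),
    sq_nonneg (x^2 - x), sq_nonneg (x*(x+1)), mul_nonneg (mul_nonneg (neg_nonneg.2 hx0) (neg_nonneg.2 hx0)) (neg_nonneg.2 hx0)]

private lemma poly_pos {u : ℝ} (h1 : 1/2 ≤ u) (h2 : u ≤ 1) :
    (1 - u) * (2*u - 1)^2 ≤ 4 * u^2 * (1 - u/4)^2 * (1 - u/2)^2 := by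
  nlinarith [sq_nonneg (u - 1/2), sq_nonneg (u-1), sq_nonneg u, mul_nonneg (sub_nonneg.2 h2) (sq_nonneg (2*u-1))]

set_option maxHeartbeats 1000000 in
private lemma trig_key_aux {x y : ℝ} (hx : 0 ≤ x) (hy : 0 ≤ y) (hxy : x^2 + y^2 = 1) :
    0 ≤ x * Real.cos (2*y) + y * Real.sin (2*y) := by
  have hy1 : y ≤ 1 := by nlinarith
  have hx1 : x ≤ 1 := by nlinarith
  rcases le_or_gt 0 (Real.cos (2*y)) with hc | hc
  · have hs : 0 ≤ Real.sin (2*y) :=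
      Real.sin_nonneg_of_nonneg_of_le_pi (by linarith) (by linarith [Real.two_le_pi])
    exact add_nonneg (mul_nonneg hx hc) (mul_nonneg hy hs)
  · have hsy : Real.sin y ≤ y := Real.sin_le hy
    have hpy : y ≤ Real.pi := by linarith [Real.two_le_pi]
    have hsnn : 0 ≤ Real.sin y := Real.sin_nonneg_of_nonneg_of_le_pi hy hpy
    have hcos2 : Real.cos (2*y) = 1 - 2 * Real.sin y ^ 2 := by
      rw [Real.cos_two_mul']
      nlinarith [Real.sin_sq_add_cos_sq y]
    have hy2 : 1 < 2 * y^2 := by nlinarith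
    have hy0 : 0 < y := by nlinarith
    have hsin : y - y^3/4 < Real.sin y := by nlinarith [Real.sin_gt_sub_cube hy0, pow_pos hy0 3]
    have hcosy : 1 - y^2/2 ≤ Real.cos y := Real.one_sub_sq_div_two_le_cos
    have hsin2 : Real.sin (2*y) = 2 * Real.sin y * Real.cos y := Real.sin_two_mul y
    have h1 : (0:ℝ) ≤ 1 - y^2/2 := by nlinarith
    have h2 : (0:ℝ) ≤ y - y^3/4 := by nlinarith
    have hL : 2 * (y - y^3/4) * (1 - y^2/2) ≤ Real.sin (2*y) := by
      rw [hsin2]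
      nlinarith [hsin, hcosy, h1, h2]
    have hR : -Real.cos (2*y) ≤ 2*y^2 - 1 := by
      rw [hcos2]
      nlinarith [hsy, hsnn]
    have hx2 : x^2 = 1 - y^2 := by linarith
    have hkey : x * (2*y^2 - 1) ≤ y * (2 * (y - y^3/4) * (1 - y^2/2)) := by
      have hpp := poly_pos (u := y^2) (by nlinarith) (by nlinarith)
      have hL0 : 0 ≤ y * (2 * (y - y^3/4) * (1 - y^2/2)) := by positivity
      have hx0' : 0 ≤ x * (2*y^2 - 1) := by nlinarith
      have hsq : (x * (2*y^2 - 1))^2 ≤ (y * (2 * (y - y^3/4) * (1 - y^2/2)))^2 := by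
        have e1 : (x * (2*y^2 - 1))^2 = (1 - y^2) * (2*y^2 - 1)^2 := by
          rw [mul_pow, hx2]
        have e2 : (y * (2 * (y - y^3/4) * (1 - y^2/2)))^2
            = 4 * (y^2)^2 * (1 - y^2/4)^2 * (1 - y^2/2)^2 := by ring
        rw [e1, e2]
        linarith [hpp]
      exact (pow_le_pow_iff_left₀ hx0' hL0 two_ne_zero).mp hsq
    have hfin1 : x * (-Real.cos (2*y)) ≤ x * (2*y^2 - 1) := mul_le_mul_of_nonneg_left hR hx
    have hfin2 : y * (2 * (y - y^3/4) * (1 - y^2/2)) ≤ y * Real.sin (2*y) :=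
      mul_le_mul_of_nonneg_left hL hy
    nlinarith [hfin1, hfin2, hkey]

private lemma trig_key {x y : ℝ} (hx : 0 ≤ x) (hxy : x^2 + y^2 = 1) :
    0 ≤ x * Real.cos (2*y) + y * Real.sin (2*y) := by
  rcases le_or_gt 0 y with hy | hy
  · exact trig_key_aux hx hy hxy
  · have h := trig_key_aux (y := -y) hx (by linarith) (by nlinarith)
    have e1 : 2 * -y = -(2*y) := by ring
    rw [e1, Real.cos_neg, Real.sin_neg] at h
    nlinarith [h]

private lemma exp_one_lb : (2.71:ℝ) < Real.exp 1 := by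
  have := Real.exp_one_gt_d9; linarith

private lemma exp_one_ub : Real.exp 1 < 2.72 := by
  have := Real.exp_one_lt_d9; linarith

private lemma inv_exp_sq_lb : (0.13 : ℝ) < (Real.exp 1 ^ 2)⁻¹ := by
  have he2 := exp_one_ub
  have he1 := exp_one_lb
  have h3 : Real.exp 1 ^ 2 < 7.4 := by nlinarith
  have h4 : (0:ℝ) < Real.exp 1 ^ 2 := by positivity
  have h5 : (Real.exp 1 ^ 2)⁻¹ * (Real.exp 1 ^ 2) = 1 := inv_mul_cancel₀ h4.ne'
  nlinarith [h5, h3, h4, inv_pos.mpr h4]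

set_option maxHeartbeats 800000 in
/-- The key real inequality in the case `x ≤ 0`. -/
private lemma re_nonpos {x y s : ℝ} (hxy : x^2 + y^2 = 1) (hx : x ≤ 0) (hs : (2.84:ℝ) ≤ s) :
    Real.exp (2*x) * Real.cos (2*y) + s * x ≤ 0 := by
  have hs0 : (0:ℝ) ≤ s := by linarith
  rcases le_or_gt (Real.cos (2*y)) 0 with hc | hc
  · have h1 : Real.exp (2*x) * Real.cos (2*y) ≤ 0 :=
      mul_nonpos_of_nonneg_of_nonpos (Real.exp_pos _).le hc
    nlinarith [mul_nonneg hs0 (neg_nonneg.2 hx)]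
  · set a := |y| with hay
    have hca : Real.cos (2*y) = Real.cos (2*a) := by
      rw [show 2*a = |2*y| by rw [abs_mul]; norm_num [hay], Real.cos_abs]
    have ha0 : 0 ≤ a := abs_nonneg y
    have ha2 : a^2 = 1 - x^2 := by rw [hay, _root_.sq_abs]; linarith
    have ha1 : a ≤ 1 := by nlinarith
    have hxm1 : -1 ≤ x := by nlinarith
    rcases eq_or_lt_of_le ha0 with h0 | h0
    · have hx1 : x = -1 := by nlinarith
      rw [hca, ← h0]
      have hcz : Real.cos (2 * (0:ℝ)) = 1 := by norm_num
      rw [hcz]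
      have hee : Real.exp (2*x) ≤ 1 := by
        rw [hx1]; rw [Real.exp_le_one_iff]; norm_num
      nlinarith
    · have hsina : a - a^3/4 < Real.sin a := by nlinarith [Real.sin_gt_sub_cube h0, pow_pos h0 3]
      have hsina0 : 0 ≤ a - a^3/4 := by nlinarith
      have hcos2a : Real.cos (2*a) = 1 - 2 * Real.sin a ^ 2 := by
        rw [Real.cos_two_mul']
        nlinarith [Real.sin_sq_add_cos_sq a]
      have hB : Real.cos (2*a) ≤ 1 - 2*(a - a^3/4)^2 := by
        rw [hcos2a]; nlinarith [hsina, hsina0]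
      have hBpos : 0 < 1 - 2*(a - a^3/4)^2 := lt_of_lt_of_le (hca ▸ hc) hB
      have h2x : (0:ℝ) < 1 - 2*x := by linarith
      have hexp2x : Real.exp (2*x) ≤ (1 - 2*x)⁻¹ := by
        have h1 : 1 - 2*x ≤ Real.exp (-(2*x)) := by
          have := Real.add_one_le_exp (-(2*x)); linarith
        rw [Real.exp_neg] at h1
        have h3 : (0:ℝ) < Real.exp (2*x) := Real.exp_pos _
        have h4 := mul_le_mul_of_nonneg_right h1 h3.le
        rw [inv_mul_cancel₀ h3.ne'] at h4
        have h5 : Real.exp (2*x) ≤ 1 / (1-2*x) :=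
          (le_div_iff₀ h2x).mpr (by nlinarith)
        simpa [one_div] using h5
      have hstep : Real.exp (2*x) * Real.cos (2*y) + s * x
          ≤ (1-2*x)⁻¹ * (1 - 2*(a - a^3/4)^2) + s * x := by
        rw [hca]
        have hst : Real.exp (2*x) * Real.cos (2*a)
            ≤ (1-2*x)⁻¹ * (1 - 2*(a - a^3/4)^2) :=
          le_trans (mul_le_mul_of_nonneg_left hB (Real.exp_pos _).le)
            (mul_le_mul_of_nonneg_right hexp2x hBpos.le)
        linarith
      have hBx : (a - a^3/4)^2 = (1-x^2) * (1 - (1-x^2)/4)^2 := by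
        rw [← ha2]; ring
      have hxfac : x * (1-2*x) ≤ 0 :=
        mul_nonpos_of_nonpos_of_nonneg hx (by linarith)
      have hsx : s * (x * (1-2*x)) ≤ 2.7 * (x * (1-2*x)) := by nlinarith [hxfac, hs]
      have hpoly := poly_neg hxm1 hx
      have hkey2 : (1 - 2*(a - a^3/4)^2) + s * (x * (1-2*x)) ≤ 0 := by
        rw [hBx]; linarith
      have heqd : (1-2*x)⁻¹ * (1 - 2*(a - a^3/4)^2) + s * x
          = ((1 - 2*(a - a^3/4)^2) + s * (x * (1-2*x))) / (1-2*x) := by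
        field_simp
      have hfin : (1-2*x)⁻¹ * (1 - 2*(a - a^3/4)^2) + s * x ≤ 0 := by
        rw [heqd]
        exact div_nonpos_of_nonpos_of_nonneg hkey2 h2x.le
      linarith

private lemma excl {ζ u : ℂ} {s : ℝ} (hζ : ‖ζ‖ = 1)
    (hs : Real.exp 1 + (Real.exp 1 ^ 2)⁻¹ ≤ s) (hu : ‖u‖ < 1) :
    Complex.exp u ≠ Complex.exp (2 * ζ) + (s : ℂ) * ζ := by
  intro heq
  set x := ζ.re with hxdef
  set y := ζ.im with hydef
  have hxy : x^2 + y^2 = 1 := by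
    have h1 : Complex.normSq ζ = 1 := by
      rw [← Complex.sq_norm, hζ]; norm_num
    have h2 := Complex.normSq_apply ζ
    rw [h1] at h2
    nlinarith [h2.symm]
  have hs' : (2.84 : ℝ) ≤ s := by linarith [exp_one_lb, inv_exp_sq_lb]
  have hse : Real.exp 1 < s := by
    have : (0:ℝ) < (Real.exp 1 ^ 2)⁻¹ := by positivity
    linarith
  have hs0 : (0:ℝ) ≤ s := by linarith
  have hure : u.re < 1 :=
    lt_of_le_of_lt (le_trans (le_abs_self _)
      (by simpa using Complex.abs_re_le_norm u)) hu
  have huim : |u.im| < 1 :=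
    lt_of_le_of_lt (by simpa using Complex.abs_im_le_norm u) hu
  have hexpu_re_pos : 0 < (Complex.exp u).re := by
    rw [Complex.exp_re]
    have hc : 0 < Real.cos u.im := by
      apply Real.cos_pos_of_mem_Ioo
      constructor
      · nlinarith [Real.pi_gt_three, abs_lt.mp huim |>.1]
      · nlinarith [Real.pi_gt_three, abs_lt.mp huim |>.2]
    positivity
  have hexpu_norm : ‖Complex.exp u‖ < Real.exp 1 := by
    rw [Complex.norm_exp]
    exact Real.exp_lt_exp.mpr hure
  set A := Complex.exp (2 * ζ) with hA
  have h2re : (2 * ζ).re = 2 * x := by simp [Complex.mul_re, hxdef]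
  have h2im : (2 * ζ).im = 2 * y := by simp [Complex.mul_im, hydef]
  have hAre : A.re = Real.exp (2*x) * Real.cos (2*y) := by
    rw [hA, Complex.exp_re, h2re, h2im]
  have hAim : A.im = Real.exp (2*x) * Real.sin (2*y) := by
    rw [hA, Complex.exp_im, h2re, h2im]
  have hvre : (Complex.exp (2*ζ) + (s:ℂ) * ζ).re = A.re + s * x := by
    simp [← hA, Complex.add_re, Complex.mul_re, hxdef]
  have hvim : (Complex.exp (2*ζ) + (s:ℂ) * ζ).im = A.im + s * y := by
    simp [← hA, Complex.add_im, Complex.mul_im, hydef]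
  rcases le_or_gt x 0 with hx | hx
  · have hneg : A.re + s * x ≤ 0 := by
      rw [hAre]; exact re_nonpos hxy hx hs'
    have hre := congrArg Complex.re heq
    rw [hvre] at hre
    linarith [hexpu_re_pos]
  · have hkey := trig_key hx.le hxy
    have h0 : 0 ≤ A.re * x + A.im * y := by
      rw [hAre, hAim]
      have he : Real.exp (2*x) * Real.cos (2*y) * x + Real.exp (2*x) * Real.sin (2*y) * y
          = Real.exp (2*x) * (x * Real.cos (2*y) + y * Real.sin (2*y)) := by ring
      rw [he]
      exact mul_nonneg (Real.exp_pos _).le hkey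
    set v := Complex.exp (2*ζ) + (s:ℂ) * ζ with hv
    have hnsq : s^2 ≤ ‖v‖^2 := by
      have hvsq : ‖v‖^2 = v.re^2 + v.im^2 := by
        rw [Complex.sq_norm, Complex.normSq_apply]; ring
      rw [hvsq, hv, hvre, hvim]
      nlinarith [mul_nonneg hs0 h0, sq_nonneg A.re, sq_nonneg A.im, hxy, sq_nonneg s]
    have hvn : s ≤ ‖v‖ := (pow_le_pow_iff_left₀ hs0 (norm_nonneg v) two_ne_zero).mp hnsq
    rw [← heq] at hvn
    linarith [hexpu_norm]

end Aux

theorem stmt_14 (β : ℝ) (hβ : Real.exp 1 + (Real.exp 1 ^ 2)⁻¹ ≤ β)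
    (p : ℂ → ℂ) (hp : DifferentiableOn ℂ p unitDisk) (hp0 : p 0 = 1)
    (hpne : ∀ z ∈ unitDisk, p z ≠ 0)
    (hsub : Subord (fun z => (p z) ^ 2 + (β : ℂ) * z * deriv p z / p z)
      Complex.exp) :
    Subord p Complex.exp := by
  have hβ0 : 0 < β := lt_of_lt_of_le (by positivity) hβ
  obtain ⟨Q, hQ0, hQd, hQexp⟩ := exists_log hp hp0 hpne
  refine ⟨Q, fun z hz => ((hQd z hz).differentiableAt).differentiableWithinAt, hQ0, ?_,
    fun z hz => (hQexp z hz).symm⟩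
  by_contra hbad
  push_neg at hbad
  obtain ⟨z₁, hz₁, hq₁⟩ := hbad
  have hQdiff : DifferentiableOn ℂ Q unitDisk :=
    fun z hz => ((hQd z hz).differentiableAt).differentiableWithinAt
  obtain ⟨z₀, hz₀, m, hm, habs, hjack⟩ := jack hQdiff hQ0 hz₁ hq₁
  obtain ⟨W, _, hW0, hWlt, hWeq⟩ := hsub
  have hW := hWeq z₀ hz₀
  have hWn := hWlt z₀ hz₀
  have hQderiv : deriv Q z₀ = deriv p z₀ / p z₀ := (hQd z₀ hz₀).deriv
  rw [hQderiv] at hjack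
  have hsm : Real.exp 1 + (Real.exp 1 ^ 2)⁻¹ ≤ β * m :=
    le_trans hβ (le_mul_of_one_le_right hβ0.le hm)
  have hW' : p z₀ ^ 2 + (β:ℂ) * z₀ * deriv p z₀ / p z₀ = Complex.exp (W z₀) := hW
  have hval : Complex.exp (W z₀) = Complex.exp (2 * Q z₀) + ((β * m : ℝ) : ℂ) * Q z₀ := by
    rw [← hW']
    have h1 : p z₀ ^ 2 = Complex.exp (2 * Q z₀) := by
      rw [← hQexp z₀ hz₀, sq, ← Complex.exp_add, two_mul]
    have h2 : (β:ℂ) * z₀ * deriv p z₀ / p z₀ = ((β * m : ℝ) : ℂ) * Q z₀ := by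
      rw [mul_div_assoc, mul_assoc, hjack]
      push_cast
      ring
    rw [h1, h2]
  exact excl habs hsm hWn hval

end
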